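/- For all y ∈ (1, ∞), the quantity G(y) := (y-1)y³ψ''(y) + (y-1)² + 2y²ψ'(y) is strictly positive. -/

import Mathlib

open Real Filter Asymptotics MeasureTheory Set Topology

noncomputable def trigamma (y : ℝ) : ℝ := ∑' m : ℕ, 1 / (m + y)^2

noncomputable def psi2 (y : ℝ) : ℝ := -2 * ∑' m : ℕ, 1 / (m + y)^3

lemma hasSum_telescope' (f : ℕ → ℝ) (hf : Tendsto f atTop (𝓝 0))
    (hmono : ∀ n, f (n+1) ≤ f n) : HasSum (fun m => f m - f (m+1)) (f 0) := by
  rw [hasSum_iff_tendsto_nat_of_nonneg (fun i => sub_nonneg.2 (hmono i))]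
  have h : ∀ n : ℕ, ∑ i ∈ Finset.range n, (f i - f (i+1)) = f 0 - f n :=
    fun n => Finset.sum_range_sub' f n
  simpa [h] using (tendsto_const_nhds.sub hf)

lemma tendsto_inv_shift (c : ℝ) :
    Tendsto (fun n : ℕ => 1 / ((n : ℝ) + c)) atTop (𝓝 0) := by
  have h : Tendsto (fun n : ℕ => ((n : ℝ) + c)⁻¹) atTop (𝓝 0) :=
    Tendsto.comp tendsto_inv_atTop_zero
      (tendsto_atTop_add_const_right _ c tendsto_natCast_atTop_atTop)
  simpa [one_div] using h

lemma cast_pos_shift (m : ℕ) (c : ℝ) (hc : 0 < c) : 0 < (m : ℝ) + c := by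
  have : (0:ℝ) ≤ m := Nat.cast_nonneg m
  linarith

lemma trigamma_summable (y : ℝ) (hy : 1 < y) :
    Summable (fun m : ℕ => 1 / ((m : ℝ) + y)^2) := by
  have hT : HasSum (fun m : ℕ => 1 / ((m : ℝ) + (y-1)) - 1 / ((m+1 : ℕ) + (y-1)))
      (1 / ((0:ℕ) + (y-1))) := by
    apply hasSum_telescope'
    · exact tendsto_inv_shift (y-1)
    · intro n
      have h1 : (0:ℝ) < n + (y-1) := cast_pos_shift n _ (by linarith)
      apply one_div_le_one_div_of_le h1
      push_cast; linarith
  apply Summable.of_nonneg_of_le (fun m => by positivity) _ hT.summable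
  intro m
  have h1 : (0:ℝ) < m + (y-1) := cast_pos_shift m _ (by linarith)
  have h2 : (0:ℝ) < m + y := cast_pos_shift m _ (by linarith)
  have heq : 1 / ((m : ℝ) + (y-1)) - 1 / ((m+1 : ℕ) + (y-1))
      = 1 / (((m:ℝ) + (y-1)) * ((m:ℝ) + y)) := by
    push_cast
    have h3 : (0:ℝ) < (m:ℝ) + 1 + (y-1) := by linarith
    rw [div_sub_div _ _ (ne_of_gt h1) (ne_of_gt h3)]
    congr 1 <;> ring
  rw [heq]
  apply one_div_le_one_div_of_le (by positivity)
  nlinarith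

lemma trigamma_lb (y : ℝ) (hy : 1 < y) : 1/y + 1/(2*y^2) ≤ trigamma y := by
  set f : ℕ → ℝ := fun m => 1 / ((m : ℝ) + y) + 1 / (2 * ((m : ℝ) + y)^2) with hf
  have hpos : ∀ m : ℕ, (0:ℝ) < (m:ℝ) + y := fun m => cast_pos_shift m _ (by linarith)
  have hT : HasSum (fun m : ℕ => f m - f (m+1)) (f 0) := by
    apply hasSum_telescope'
    · have h1 := tendsto_inv_shift y
      have h2 : Tendsto (fun n : ℕ => 1 / (2 * ((n : ℝ) + y)^2)) atTop (𝓝 0) := by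
        have := ((tendsto_inv_shift y).mul (tendsto_inv_shift y)).const_mul (1/2 : ℝ)
        simpa [div_mul_div_comm, sq, mul_comm, mul_assoc, mul_left_comm] using this
      simpa [hf] using h1.add h2
    · intro n
      have h1 := hpos n
      have h2 := hpos (n+1)
      simp only [hf]
      push_cast
      push_cast at h2
      have e1 : 1 / ((n:ℝ) + 1 + y) ≤ 1 / ((n:ℝ) + y) :=
        one_div_le_one_div_of_le h1 (by linarith)
      have e2 : 1 / (2 * ((n:ℝ) + 1 + y)^2) ≤ 1 / (2 * ((n:ℝ) + y)^2) :=
        one_div_le_one_div_of_le (by positivity) (by nlinarith)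
      linarith
  have h0 : f 0 = 1/y + 1/(2*y^2) := by simp [hf]
  rw [← h0, ← hT.tsum_eq]
  apply Summable.tsum_le_tsum _ hT.summable (trigamma_summable y hy)
  intro m
  have h1 := hpos m
  have h2 := hpos (m+1)
  have heq : 1 / ((m:ℝ) + y)^2 - (f m - f (m+1))
      = 1 / (2 * ((m:ℝ) + y)^2 * ((m:ℝ) + y + 1)^2) := by
    simp only [hf]
    push_cast
    have h3 : ((m:ℝ) + y + 1) ≠ 0 := by push_cast at h2; intro h; rw [← h] at h2; linarith
    field_simp
    ring
  nlinarith [one_div_pos.mpr (show (0:ℝ) < 2 * ((m:ℝ) + y)^2 * ((m:ℝ) + y + 1)^2 by positivity)]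

lemma psi2_lb (y : ℝ) (hy : 1 < y) : -(1 / (y - 1/2)^2) ≤ psi2 y := by
  set f : ℕ → ℝ := fun m => 1 / ((m : ℝ) + (y - 1/2))^2 with hf
  have hpos : ∀ m : ℕ, (0:ℝ) < (m:ℝ) + (y - 1/2) := fun m => cast_pos_shift m _ (by linarith)
  have hposy : ∀ m : ℕ, (0:ℝ) < (m:ℝ) + y := fun m => cast_pos_shift m _ (by linarith)
  have hT : HasSum (fun m : ℕ => f m - f (m+1)) (f 0) := by
    apply hasSum_telescope'
    · have := (tendsto_inv_shift (y-1/2)).mul (tendsto_inv_shift (y-1/2))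
      simpa [hf, div_mul_div_comm, sq] using this
    · intro n
      have h1 := hpos n
      have h2 := hpos (n+1)
      simp only [hf]
      apply one_div_le_one_div_of_le (by positivity)
      push_cast at h2 ⊢
      nlinarith
  have hle : ∀ m : ℕ, 1 / ((m : ℝ) + y)^3 ≤ (1/2) * (f m - f (m+1)) := by
    intro m
    have h1 := hpos m
    have h2 := hpos (m+1)
    have ht : (1:ℝ) < (m:ℝ) + y := by
      have : (0:ℝ) ≤ m := Nat.cast_nonneg m; linarith
    simp only [hf]
    push_cast
    push_cast at h2
    rw [div_sub_div _ _ (pow_ne_zero 2 (ne_of_gt h1)) (pow_ne_zero 2 (ne_of_gt h2)),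
        ← mul_div_assoc, div_le_div_iff₀ (by positivity) (by positivity)]
    nlinarith [mul_pos (sub_pos.2 ht) (show (0:ℝ) < (m:ℝ) + y + 1 by linarith),
      sq_nonneg ((m:ℝ) + y)]
  have hS : Summable (fun m : ℕ => 1 / ((m : ℝ) + y)^3) :=
    Summable.of_nonneg_of_le (fun m => by positivity) hle (hT.summable.mul_left (1/2))
  have hsum : (∑' m : ℕ, 1 / ((m : ℝ) + y)^3) ≤ (1/2) * f 0 := by
    calc (∑' m : ℕ, 1 / ((m : ℝ) + y)^3)
        ≤ ∑' m : ℕ, (1/2) * (f m - f (m+1)) :=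
          Summable.tsum_le_tsum hle hS ((hT.mul_left (1/2)).summable)
      _ = (1/2) * f 0 := (hT.mul_left (1/2)).tsum_eq
  have h0 : f 0 = 1 / (y - 1/2)^2 := by simp [hf]
  rw [h0] at hsum
  unfold psi2
  nlinarith

theorem stmt4 (y : ℝ) (hy : 1 < y) :
    0 < (y-1)*y^3*psi2 y + (y-1)^2 + 2*y^2*trigamma y := by
  have h1 := trigamma_lb y hy
  have h2 := psi2_lb y hy
  have hc1 : (0:ℝ) ≤ (y-1)*y^3 := mul_nonneg (by linarith) (by positivity)
  have hA : (y-1)*y^3 * (-(1 / (y - 1/2)^2)) ≤ (y-1)*y^3 * psi2 y :=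
    mul_le_mul_of_nonneg_left h2 hc1
  have hB : 2*y^2 * (1/y + 1/(2*y^2)) ≤ 2*y^2 * trigamma y :=
    mul_le_mul_of_nonneg_left h1 (by positivity)
  have hy0 : (0:ℝ) < y := by linarith
  have hd : (0:ℝ) < y - 1/2 := by linarith
  have heqB : 2*y^2 * (1/y + 1/(2*y^2)) = 2*y + 1 := by field_simp
  have heqA : (y-1)*y^3 * (-(1 / (y - 1/2)^2))
      = -((y-1)*y^3) / (y - 1/2)^2 := by ring
  have hkey : 0 < -((y-1)*y^3) / (y - 1/2)^2 + ((y-1)^2 + (2*y + 1)) := by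
    have heq : -((y-1)*y^3) / (y - 1/2)^2 + ((y-1)^2 + (2*y + 1))
        = (9/4*y^2 - 2*y + 1/2) / (y - 1/2)^2 := by
      have hne2 : ((y - 1/2)^2 : ℝ) ≠ 0 := by positivity
      rw [div_add' _ _ _ hne2]
      congr 1
      ring
    rw [heq]
    apply div_pos (by nlinarith) (by positivity)
  linarith [heqA ▸ hA, heqB ▸ hB]
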